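/- Let (Z_i, Z_j) be jointly Gaussian with means μ_i, μ_j, variances σ_i², σ_j², and covariance Σ_{ij}. Then Cov(sign(Z_i), Z_j) = a_i · Σ_{ij}, where a_i = 2φ(μ_i/σ_i)/σ_i and φ is the standard normal density. -/

import Mathlib

open MeasureTheory ProbabilityTheory Real

/-- Standard normal density `φ(t) = (2π)^{-1/2} e^{-t²/2}`. -/
noncomputable def stdNormalPDF (t : ℝ) : ℝ :=
  (Real.sqrt (2 * Real.pi))⁻¹ * Real.exp (-t ^ 2 / 2)


section SteinAux
open Filter Set

lemma stdNormalPDF_nonneg (t : ℝ) : 0 ≤ stdNormalPDF t :=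
  mul_nonneg (inv_nonneg.2 (Real.sqrt_nonneg _)) (Real.exp_nonneg _)

lemma stdNormalPDF_eq_gauss : stdNormalPDF = gaussianPDFReal 0 1 := by
  funext x; simp [stdNormalPDF, gaussianPDFReal]

lemma measurable_stdNormalPDF : Measurable stdNormalPDF := by
  rw [stdNormalPDF_eq_gauss]; exact measurable_gaussianPDFReal 0 1

lemma gaussian01_eq :
    gaussianReal 0 1 = volume.withDensity fun x => ((stdNormalPDF x).toNNReal : ENNReal) := by
  rw [gaussianReal_of_var_ne_zero 0 one_ne_zero]
  congr 1
  funext x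
  rw [gaussianPDF_def, stdNormalPDF_eq_gauss]
  rfl

lemma integral_gaussian01 (g : ℝ → ℝ) :
    ∫ x, g x ∂(gaussianReal 0 1) = ∫ x, stdNormalPDF x * g x := by
  rw [gaussian01_eq,
    integral_withDensity_eq_integral_smul (measurable_stdNormalPDF.real_toNNReal) g]
  congr 1; funext x
  simp only [NNReal.smul_def, Real.coe_toNNReal _ (stdNormalPDF_nonneg x), smul_eq_mul]

lemma integrable_gaussian01_iff {g : ℝ → ℝ} :
    Integrable g (gaussianReal 0 1) ↔ Integrable (fun x => stdNormalPDF x * g x) := by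
  rw [gaussian01_eq]
  rw [integrable_withDensity_iff_integrable_smul measurable_stdNormalPDF.real_toNNReal]
  constructor <;> intro h <;> refine h.congr (ae_of_all _ fun x => ?_) <;>
    simp only [NNReal.smul_def, Real.coe_toNNReal _ (stdNormalPDF_nonneg x), smul_eq_mul]

lemma integrable_id_mul_stdNormalPDF : Integrable (fun x => x * stdNormalPDF x) := by
  have h := (integrable_mul_exp_neg_mul_sq (b := 1/2) (by norm_num)).const_mul
    ((Real.sqrt (2 * Real.pi))⁻¹)
  refine h.congr (ae_of_all _ fun x => ?_)
  simp only [stdNormalPDF]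
  ring_nf

lemma hasDerivAt_neg_stdNormalPDF (x : ℝ) :
    HasDerivAt (fun y => -stdNormalPDF y) (x * stdNormalPDF x) x := by
  have h1 : HasDerivAt (fun y : ℝ => -y ^ 2 / 2) (-x) x := by
    have := ((hasDerivAt_pow 2 x).neg).div_const 2
    simpa using this.congr_deriv (by ring)
  have h2 := (h1.exp.const_mul ((Real.sqrt (2 * Real.pi))⁻¹)).neg
  refine h2.congr_deriv ?_
  simp only [stdNormalPDF]; ring

lemma tendsto_negsq_half (l : Filter ℝ) (h : Tendsto (fun y : ℝ => y ^ 2) l atTop) :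
    Tendsto (fun y : ℝ => -y ^ 2 / 2) l atBot := by
  have := tendsto_neg_atTop_atBot.comp (h.atTop_div_const (by norm_num : (0:ℝ) < 2))
  exact this.congr fun y => by simp [Function.comp]; ring

lemma tendsto_stdNormalPDF_atTop : Tendsto (fun y => stdNormalPDF y) atTop (nhds 0) := by
  have h1 := tendsto_negsq_half atTop (tendsto_pow_atTop two_ne_zero)
  have := (Real.tendsto_exp_atBot.comp h1).const_mul ((Real.sqrt (2 * Real.pi))⁻¹)
  simpa [stdNormalPDF, Function.comp] using this

lemma tendsto_stdNormalPDF_atBot : Tendsto (fun y => stdNormalPDF y) atBot (nhds 0) := by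
  have hsq : Tendsto (fun y : ℝ => y ^ 2) atBot atTop := by
    have h2 : Tendsto (fun y : ℝ => (-y) ^ 2) atBot atTop :=
      (tendsto_pow_atTop (n := 2) two_ne_zero).comp tendsto_neg_atBot_atTop
    exact h2.congr fun y => by ring
  have h1 := tendsto_negsq_half atBot hsq
  have := (Real.tendsto_exp_atBot.comp h1).const_mul ((Real.sqrt (2 * Real.pi))⁻¹)
  simpa [stdNormalPDF, Function.comp] using this

lemma integral_Ioi_xphi (a : ℝ) : ∫ x in Ioi a, x * stdNormalPDF x = stdNormalPDF a := by
  have := integral_Ioi_of_hasDerivAt_of_tendsto'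
    (f := fun y => -stdNormalPDF y) (f' := fun x => x * stdNormalPDF x) (a := a)
    (fun x _ => hasDerivAt_neg_stdNormalPDF x)
    integrable_id_mul_stdNormalPDF.integrableOn
    (by simpa using tendsto_stdNormalPDF_atTop.neg)
  simpa using this

lemma integral_Iic_xphi (a : ℝ) : ∫ x in Iic a, x * stdNormalPDF x = -stdNormalPDF a := by
  have := integral_Iic_of_hasDerivAt_of_tendsto'
    (f := fun y => -stdNormalPDF y) (f' := fun x => x * stdNormalPDF x) (a := a)
    (fun x _ => hasDerivAt_neg_stdNormalPDF x)
    integrable_id_mul_stdNormalPDF.integrableOn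
    (by simpa using tendsto_stdNormalPDF_atBot.neg)
  simpa using this

lemma stdNormalPDF_neg (t : ℝ) : stdNormalPDF (-t) = stdNormalPDF t := by
  simp [stdNormalPDF, neg_pow]

lemma measurable_realSign : Measurable Real.sign := by
  have : Real.sign = fun r : ℝ => if r < 0 then (-1 : ℝ) else if 0 < r then 1 else 0 := by
    funext r; rfl
  rw [this]
  exact Measurable.ite (measurableSet_lt measurable_id measurable_const) measurable_const
    (Measurable.ite (measurableSet_lt measurable_const measurable_id) measurable_const
      measurable_const)

lemma abs_realSign_le (r : ℝ) : |Real.sign r| ≤ 1 := by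
  rcases lt_trichotomy r 0 with h | h | h
  · simp [Real.sign_of_neg h]
  · simp [h, Real.sign_zero]
  · simp [Real.sign_of_pos h]

lemma integral_mul_sign (a : ℝ) (s : ℝ → ℝ) (hpos : ∀ x, a < x → s x = 1)
    (hneg : ∀ x, x < a → s x = -1) (hz : s a = 0) :
    ∫ x, stdNormalPDF x * (x * s x) = 2 * stdNormalPDF a := by
  have hfe : (fun x => stdNormalPDF x * (x * s x)) = fun x =>
      (Ioi a).indicator (fun x => x * stdNormalPDF x) x
        - (Iio a).indicator (fun x => x * stdNormalPDF x) x := by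
    funext x
    rcases lt_trichotomy x a with h | h | h
    · rw [indicator_of_notMem (by simpa using h.le), indicator_of_mem (by simpa using h),
        hneg x h]
      ring
    · subst h
      rw [indicator_of_notMem (by simp), indicator_of_notMem (by simp), hz]
      ring
    · rw [indicator_of_mem (by simpa using h), indicator_of_notMem (by simpa using h.le),
        hpos x h]
      ring
  rw [hfe, integral_sub
    (integrable_id_mul_stdNormalPDF.indicator measurableSet_Ioi)
    (integrable_id_mul_stdNormalPDF.indicator measurableSet_Iio),
    integral_indicator measurableSet_Ioi, integral_indicator measurableSet_Iio,
    setIntegral_congr_set Iio_ae_eq_Iic, integral_Ioi_xphi, integral_Iic_xphi]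
  ring

end SteinAux

/-- Stein's lemma for the sign function.  A pair `(Zᵢ, Zⱼ)` that is jointly Gaussian with
means `μᵢ, μⱼ`, variances `σᵢ², σⱼ²` and covariance `Σᵢⱼ` is realized as the image of two
independent standard Gaussians `p = (p₁, p₂)` under
`Zᵢ = μᵢ + σᵢ p₁`, `Zⱼ = μⱼ + (Σᵢⱼ/σᵢ) p₁ + √(σⱼ² - (Σᵢⱼ/σᵢ)²) p₂`.
Then `Cov(sign Zᵢ, Zⱼ) = aᵢ Σᵢⱼ` where `aᵢ = 2φ(μᵢ/σᵢ)/σᵢ`. -/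
theorem stmt_2 (μi μj σi σj Sij : ℝ) (hσi : 0 < σi) (hσj : 0 < σj)
    (hcs : Sij ^ 2 ≤ σi ^ 2 * σj ^ 2) :
    let P := (gaussianReal 0 1).prod (gaussianReal 0 1)
    let Zi : ℝ × ℝ → ℝ := fun p => μi + σi * p.1
    let Zj : ℝ × ℝ → ℝ := fun p =>
      μj + (Sij / σi) * p.1 + Real.sqrt (σj ^ 2 - (Sij / σi) ^ 2) * p.2
    (∫ p, Real.sign (Zi p) * Zj p ∂P) -
        (∫ p, Real.sign (Zi p) ∂P) * (∫ p, Zj p ∂P) =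
      (2 * stdNormalPDF (μi / σi) / σi) * Sij := by
  intro P Zi Zj
  simp only [P, Zi, Zj]
  set γ := gaussianReal 0 1 with hγ
  set c := Sij / σi with hc
  set d := Real.sqrt (σj ^ 2 - (Sij / σi) ^ 2) with hd
  set s : ℝ → ℝ := fun x => Real.sign (μi + σi * x) with hs
  -- measurability and integrability over γ
  have hs_meas : Measurable s :=
    measurable_realSign.comp (measurable_const.add (measurable_id.const_mul σi))
  have hs_bdd : ∀ x, ‖s x‖ ≤ 1 := fun x => by simpa using abs_realSign_le (μi + σi * x)
  have hs_int : Integrable s γ :=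
    (integrable_const (1 : ℝ)).mono' hs_meas.aestronglyMeasurable (ae_of_all _ hs_bdd)
  have hid_int : Integrable (fun x : ℝ => x) γ := by
    rw [integrable_gaussian01_iff]
    exact integrable_id_mul_stdNormalPDF.congr (ae_of_all _ fun x => by ring)
  have haff_int : Integrable (fun x : ℝ => μj + c * x) γ :=
    (integrable_const μj).add (hid_int.const_mul c)
  have hf1_int : Integrable (fun x : ℝ => s x * (μj + c * x)) γ :=
    haff_int.bdd_mul hs_meas.aestronglyMeasurable (ae_of_all _ hs_bdd)
  have hxs_int : Integrable (fun x : ℝ => x * s x) γ :=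
    (hid_int.bdd_mul hs_meas.aestronglyMeasurable (ae_of_all _ hs_bdd)).congr
      (ae_of_all _ fun x => by ring)
  -- integral values over γ
  have hid0 : ∫ x, x ∂γ = 0 := by
    rw [hγ, integral_gaussian01]
    have : (fun x : ℝ => stdNormalPDF x * x) = fun x => x * stdNormalPDF x := by
      funext x; ring
    rw [this, ← intervalIntegral.integral_Iic_add_Ioi (b := 0)
      integrable_id_mul_stdNormalPDF.integrableOn integrable_id_mul_stdNormalPDF.integrableOn,
      integral_Iic_xphi, integral_Ioi_xphi]
    ring
  have h0 : μi + σi * (-(μi / σi)) = 0 := by field_simp; ring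
  have hJ : ∫ x, x * s x ∂γ = 2 * stdNormalPDF (μi / σi) := by
    rw [hγ, integral_gaussian01,
      integral_mul_sign (-(μi / σi)) s
        (fun x hx => Real.sign_of_pos (by nlinarith [mul_lt_mul_of_pos_left hx hσi]))
        (fun x hx => Real.sign_of_neg (by nlinarith [mul_lt_mul_of_pos_left hx hσi]))
        (by rw [hs]; simp only [h0, Real.sign_zero]),
      stdNormalPDF_neg]
  set S := ∫ x, s x ∂γ with hS
  have hf1 : ∫ x, s x * (μj + c * x) ∂γ = μj * S + c * (2 * stdNormalPDF (μi / σi)) := by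
    have he : (fun x : ℝ => s x * (μj + c * x)) = fun x => μj * s x + c * (x * s x) := by
      funext x; ring
    rw [he, integral_add (hs_int.const_mul μj) (hxs_int.const_mul c),
      integral_const_mul, integral_const_mul, hJ]
  -- product integrals
  have h1 : ∫ p, s p.1 * (μj + c * p.1 + d * p.2) ∂(γ.prod γ)
      = μj * S + c * (2 * stdNormalPDF (μi / σi)) := by
    have hsplit : (fun p : ℝ × ℝ => s p.1 * (μj + c * p.1 + d * p.2)) = fun p =>
        (fun x => s x * (μj + c * x)) p.1 * (fun _ => (1 : ℝ)) p.2
          + (fun x => d * s x) p.1 * (fun y => y) p.2 := by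
      funext p; dsimp only; ring
    have e1 : ∫ a : ℝ × ℝ, s a.1 * (μj + c * a.1) * 1 ∂γ.prod γ
        = (∫ x, s x * (μj + c * x) ∂γ) * ∫ _x, (1 : ℝ) ∂γ :=
      integral_prod_mul (fun x => s x * (μj + c * x)) (fun _ => (1 : ℝ))
    have e2 : ∫ a : ℝ × ℝ, d * s a.1 * a.2 ∂γ.prod γ
        = (∫ x, d * s x ∂γ) * ∫ x, x ∂γ :=
      integral_prod_mul (fun x => d * s x) (fun y => y)
    rw [hsplit, integral_add (hf1_int.mul_prod (integrable_const 1))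
        ((hs_int.const_mul d).mul_prod hid_int),
      e1, e2, hid0, hf1]
    simp
  have h2 : ∫ p, s p.1 ∂(γ.prod γ) = S := by
    have : (fun p : ℝ × ℝ => s p.1) = fun p => s p.1 * (fun _ => (1 : ℝ)) p.2 := by
      funext p; simp
    have e : ∫ p : ℝ × ℝ, s p.1 * (fun _ : ℝ => (1 : ℝ)) p.2 ∂γ.prod γ
        = (∫ x, s x ∂γ) * ∫ _x, (1 : ℝ) ∂γ :=
      integral_prod_mul s (fun _ => (1 : ℝ))
    rw [this, e]
    simp [hS]
  have h3 : ∫ p, μj + c * p.1 + d * p.2 ∂(γ.prod γ) = μj := by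
    have hsplit : (fun p : ℝ × ℝ => μj + c * p.1 + d * p.2) = fun p =>
        (fun x => μj + c * x) p.1 * (fun _ => (1 : ℝ)) p.2
          + (fun _ => d) p.1 * (fun y => y) p.2 := by
      funext p; dsimp only; ring
    have e1 : ∫ a : ℝ × ℝ, (μj + c * a.1) * 1 ∂γ.prod γ
        = (∫ x, μj + c * x ∂γ) * ∫ _x, (1 : ℝ) ∂γ :=
      integral_prod_mul (fun x => μj + c * x) (fun _ => (1 : ℝ))
    have e2 : ∫ a : ℝ × ℝ, d * a.2 ∂γ.prod γ = (∫ _x, d ∂γ) * ∫ x, x ∂γ :=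
      integral_prod_mul (fun _ => d) (fun y => y)
    rw [hsplit, integral_add (haff_int.mul_prod (integrable_const 1))
        ((integrable_const d).mul_prod hid_int), e1, e2, hid0]
    have ha : ∫ x, μj + c * x ∂γ = μj := by
      rw [integral_add (integrable_const μj) (hid_int.const_mul c), integral_const_mul, hid0]
      simp
    simp [ha]
  rw [h1, h2, h3, hc]
  field_simp
  ring
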